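/- (Proposition 1, constraint reformulation.) Let K ⊆ ℝ^ℓ be a proper cone with dual cone K*, let W ∈ ℝ^{ℓ×N}, and define Ξ = {ξ ∈ ℝ^N : e₁'ξ = 1, Wξ ∈ K}. Assume Ξ is compact and there exists ξ₀ with e₁'ξ₀ = 1 and Wξ₀ in the interior of K. Then a matrix F ∈ ℝ^{m×N} satisfies F·ξ ≤ 0 componentwise for every ξ ∈ Ξ if and only if there exist Z ∈ ℝ^{m×N}, ν ∈ ℝ^m with ν ≥ 0 componentwise, and Π ∈ ℝ^{ℓ×m} with every column of Π in K*, such that F + Z = 0 and Z = ν·e₁' + Π'·W. -/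

import Mathlib

open Matrix

lemma repr_clm {n : ℕ} (a : (Fin n → ℝ) →L[ℝ] ℝ) (y : Fin n → ℝ) :
    a y = (fun j => a (Pi.single j 1)) ⬝ᵥ y := by
  conv_lhs => rw [pi_eq_sum_univ y]
  rw [map_sum]
  simp only [_root_.map_smul, smul_eq_mul, dotProduct]
  refine Finset.sum_congr rfl fun j _ => ?_
  rw [mul_comm]
  congr 2
  funext i
  simp [Pi.single, Function.update, eq_comm]

lemma mem_of_dual {n : ℕ} {S : Set (Fin n → ℝ)} (hconv : Convex ℝ S) (hcl : IsClosed S)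
    (hcone : ∀ c : ℝ, 0 ≤ c → ∀ x ∈ S, c • x ∈ S) (hne : S.Nonempty)
    {x : Fin n → ℝ} (hx : ∀ π : Fin n → ℝ, (∀ y ∈ S, 0 ≤ π ⬝ᵥ y) → 0 ≤ π ⬝ᵥ x) :
    x ∈ S := by
  by_contra hxS
  obtain ⟨f, u, hfu, hux⟩ := geometric_hahn_banach_closed_point hconv hcl hxS
  obtain ⟨y₀, hy₀⟩ := hne
  have h0 : (0 : Fin n → ℝ) ∈ S := by
    simpa using hcone 0 le_rfl y₀ hy₀
  have hu0 : 0 < u := by simpa using hfu 0 h0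
  have hfle : ∀ a ∈ S, f a ≤ 0 := by
    intro a ha
    by_contra hfa
    push_neg at hfa
    have hmem := hcone (u / f a + 1) (by positivity) a ha
    have h2 := hfu _ hmem
    rw [_root_.map_smul, smul_eq_mul, add_mul, div_mul_cancel₀ _ (ne_of_gt hfa), one_mul] at h2
    linarith
  set π : Fin n → ℝ := fun j => -(f (Pi.single j 1)) with hπ
  have hπd : ∀ y : Fin n → ℝ, π ⬝ᵥ y = -(f y) := by
    intro y
    rw [repr_clm f y]
    simp [hπ, dotProduct, ← Finset.sum_neg_distrib]
  have := hx π (fun y hy => by rw [hπd]; linarith [hfle y hy])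
  rw [hπd] at this
  linarith

/-- Proposition 1, constraint reformulation: for a proper cone
`K`, `Ξ = {ξ : e₁'ξ = 1, Wξ ∈ K}` compact with a Slater point, a matrix `F`
satisfies `F·ξ ≤ 0` componentwise for every `ξ ∈ Ξ` if and only if there exist
`Z`, `ν ≥ 0`, and `Π` with columns in `K*` such that `F + Z = 0` and
`Z = ν·e₁' + Π'·W`. -/
theorem statement_12 (N l m : ℕ) (hN : 0 < N)
    (Kc : Set (Fin l → ℝ)) (hKconv : Convex ℝ Kc) (hKclosed : IsClosed Kc)
    (hKcone : ∀ c : ℝ, 0 ≤ c → ∀ x ∈ Kc, c • x ∈ Kc)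
    (hKpointed : ∀ x ∈ Kc, -x ∈ Kc → x = 0)
    (hKint : (interior Kc).Nonempty)
    (W : Matrix (Fin l) (Fin N) ℝ)
    (hcpt : IsCompact {ξ : Fin N → ℝ | ξ ⟨0, hN⟩ = 1 ∧ W.mulVec ξ ∈ Kc})
    (ξ₀ : Fin N → ℝ) (hξ₀1 : ξ₀ ⟨0, hN⟩ = 1)
    (hξ₀int : W.mulVec ξ₀ ∈ interior Kc)
    (F : Matrix (Fin m) (Fin N) ℝ) :
    (∀ ξ : Fin N → ℝ, ξ ⟨0, hN⟩ = 1 → W.mulVec ξ ∈ Kc →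
      ∀ i, F.mulVec ξ i ≤ 0)
    ↔ ∃ (Z : Matrix (Fin m) (Fin N) ℝ) (ν : Fin m → ℝ)
        (P : Matrix (Fin l) (Fin m) ℝ),
        (∀ i, 0 ≤ ν i) ∧ (∀ j, ∀ x ∈ Kc, 0 ≤ (fun i => P i j) ⬝ᵥ x) ∧
        F + Z = 0 ∧
        Z = Matrix.vecMulVec ν
            (fun j : Fin N => if j = ⟨0, hN⟩ then (1 : ℝ) else 0)
          + P.transpose * W := by
  set i0 : Fin N := ⟨0, hN⟩
  set e1 : Fin N → ℝ := fun j => if j = i0 then (1:ℝ) else 0 with he1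
  have he1d : ∀ ξ : Fin N → ℝ, e1 ⬝ᵥ ξ = ξ i0 := by
    intro ξ; simp [he1, dotProduct, ite_mul]
  -- basic facts about Kc
  have hWξ₀K : W.mulVec ξ₀ ∈ Kc := interior_subset hξ₀int
  have hKne : Kc.Nonempty := ⟨_, hWξ₀K⟩
  have h0K : (0 : Fin l → ℝ) ∈ Kc := by simpa using hKcone 0 le_rfl _ hWξ₀K
  have hKadd : ∀ x ∈ Kc, ∀ y ∈ Kc, x + y ∈ Kc := by
    intro x hx y hy
    have h2 := hKcone 2 (by norm_num) _
      (hKconv hx hy (by norm_num : (0:ℝ) ≤ 1/2) (by norm_num : (0:ℝ) ≤ 1/2) (by norm_num))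
    have : (2:ℝ) • ((1/2 : ℝ) • x + (1/2 : ℝ) • y) = x + y := by
      rw [smul_add, smul_smul, smul_smul]; norm_num
    rwa [this] at h2
  -- the dual cone of Kc
  set Kd : Set (Fin l → ℝ) := {π | ∀ x ∈ Kc, 0 ≤ π ⬝ᵥ x} with hKdDef
  have h0Kd : (0 : Fin l → ℝ) ∈ Kd := by intro x hx; simp
  -- the Slater bound
  obtain ⟨ε, hε, hball⟩ : ∃ ε > 0, Metric.ball (W.mulVec ξ₀) ε ⊆ Kc := by
    rw [mem_interior_iff_mem_nhds, Metric.mem_nhds_iff] at hξ₀int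
    exact hξ₀int
  have hεbound : ∀ π ∈ Kd, ε / 2 * ‖π‖ ≤ π ⬝ᵥ W.mulVec ξ₀ := by
    intro π hπ
    set u : Fin l → ℝ := fun j => if 0 ≤ π j then -(ε/2) else ε/2 with hu
    have hz : W.mulVec ξ₀ + u ∈ Kc := by
      apply hball
      rw [Metric.mem_ball, dist_eq_norm]
      have : W.mulVec ξ₀ + u - W.mulVec ξ₀ = u := by ring_nf
      rw [this]
      have : ‖u‖ ≤ ε / 2 := by
        rw [pi_norm_le_iff_of_nonneg (by positivity)]
        intro i
        rw [Real.norm_eq_abs, abs_le]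
        constructor <;> simp only [hu] <;> split_ifs <;> linarith
      linarith
    have hπz := hπ _ hz
    rw [dotProduct_add] at hπz
    have hπu : π ⬝ᵥ u = -(ε/2) * ∑ j, |π j| := by
      rw [hu, dotProduct, Finset.mul_sum]
      refine Finset.sum_congr rfl fun j _ => ?_
      rcases le_or_gt 0 (π j) with h | h
      · simp [h, abs_of_nonneg h]; ring
      · simp [not_le.mpr h, abs_of_neg h]; ring
    have hsum : ‖π‖ ≤ ∑ j, |π j| := by
      rw [pi_norm_le_iff_of_nonneg (by positivity)]
      intro i
      calc ‖π i‖ = |π i| := rfl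
        _ ≤ ∑ j, |π j| := Finset.single_le_sum (f := fun j => |π j|)
          (fun j _ => abs_nonneg _) (Finset.mem_univ i)
    rw [hπu] at hπz
    nlinarith [mul_le_mul_of_nonneg_left hsum (le_of_lt (half_pos hε))]
  -- the cone D = R₊·e₁ + Wᵀ·K*
  set D : Set (Fin N → ℝ) := {d | ∃ ν : ℝ, 0 ≤ ν ∧ ∃ π ∈ Kd, d = ν • e1 + π ᵥ* W} with hDDef
  have h0D : (0 : Fin N → ℝ) ∈ D := ⟨0, le_rfl, 0, h0Kd, by simp⟩
  have hDconv : Convex ℝ D := by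
    rintro d₁ ⟨ν₁, hν₁, π₁, hπ₁, rfl⟩ d₂ ⟨ν₂, hν₂, π₂, hπ₂, rfl⟩ a b ha hb hab
    refine ⟨a * ν₁ + b * ν₂, by positivity, a • π₁ + b • π₂, ?_, ?_⟩
    · intro x hx
      rw [add_dotProduct, smul_dotProduct, smul_dotProduct]
      have := hπ₁ x hx
      have := hπ₂ x hx
      simp only [smul_eq_mul]
      positivity
    · rw [add_vecMul, Matrix.smul_vecMul, Matrix.smul_vecMul]
      module
  have hDcone : ∀ c : ℝ, 0 ≤ c → ∀ d ∈ D, c • d ∈ D := by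
    rintro c hc d ⟨ν, hν, π, hπ, rfl⟩
    refine ⟨c * ν, by positivity, c • π, ?_, ?_⟩
    · intro x hx
      rw [smul_dotProduct, smul_eq_mul]
      exact mul_nonneg hc (hπ x hx)
    · rw [Matrix.smul_vecMul]
      module
  have hDclosed : IsClosed D := by
    apply IsSeqClosed.isClosed
    intro x d hxD hxd
    choose ν hν π hπ hx using hxD
    have hdotcont : Continuous (fun v : Fin N → ℝ => v ⬝ᵥ ξ₀) := by
      unfold dotProduct
      exact continuous_finset_sum _ fun j _ => ((continuous_apply j).mul continuous_const)
    have htd : Filter.Tendsto (fun n => x n ⬝ᵥ ξ₀) Filter.atTop (nhds (d ⬝ᵥ ξ₀)) :=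
      (hdotcont.tendsto d).comp hxd
    obtain ⟨M, hM⟩ := htd.bddAbove_range
    have hMb : ∀ n, x n ⬝ᵥ ξ₀ ≤ M := fun n => hM ⟨n, rfl⟩
    have hdec : ∀ n, x n ⬝ᵥ ξ₀ = ν n + π n ⬝ᵥ W.mulVec ξ₀ := by
      intro n
      rw [hx n, add_dotProduct, smul_dotProduct, smul_eq_mul, he1d, hξ₀1, mul_one,
        ← dotProduct_mulVec]
    have hπWnn : ∀ n, 0 ≤ π n ⬝ᵥ W.mulVec ξ₀ := fun n => hπ n _ hWξ₀K
    have hνM : ∀ n, ν n ≤ M := by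
      intro n
      have := hMb n
      rw [hdec n] at this
      linarith [hπWnn n]
    have hπM : ∀ n, ‖π n‖ ≤ 2 * M / ε := by
      intro n
      have h1 := hεbound (π n) (hπ n)
      have h2 := hMb n
      rw [hdec n] at h2
      have h3 : ε / 2 * ‖π n‖ ≤ M := by linarith [hν n]
      rw [le_div_iff₀ hε]
      nlinarith [norm_nonneg (π n)]
    have hcompact : IsCompact (Set.Icc (0:ℝ) M ×ˢ Metric.closedBall (0 : Fin l → ℝ) (2 * M / ε)) :=
      isCompact_Icc.prod (isCompact_closedBall _ _)
    obtain ⟨⟨νl, πl⟩, hmem, φ, hφ, hconv2⟩ :=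
      hcompact.tendsto_subseq (x := fun n => (ν n, π n))
        (fun n => ⟨⟨hν n, hνM n⟩, by simpa using hπM n⟩)
    have hνt : Filter.Tendsto (fun n => ν (φ n)) Filter.atTop (nhds νl) :=
      (continuous_fst.tendsto _).comp hconv2
    have hπt : Filter.Tendsto (fun n => π (φ n)) Filter.atTop (nhds πl) :=
      (continuous_snd.tendsto _).comp hconv2
    have hπtk : ∀ k, Filter.Tendsto (fun n => π (φ n) k) Filter.atTop (nhds (πl k)) :=
      fun k => ((continuous_apply k).tendsto _).comp hπt
    have hπlKd : πl ∈ Kd := by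
      intro y hy
      have : Filter.Tendsto (fun n => π (φ n) ⬝ᵥ y) Filter.atTop (nhds (πl ⬝ᵥ y)) := by
        unfold dotProduct
        exact tendsto_finset_sum _ fun k _ => (hπtk k).mul tendsto_const_nhds
      exact ge_of_tendsto' this (fun n => hπ (φ n) y hy)
    have hνlnn : 0 ≤ νl := hmem.1.1
    refine ⟨νl, hνlnn, πl, hπlKd, ?_⟩
    have ht1 : Filter.Tendsto (fun n => x (φ n)) Filter.atTop (nhds d) :=
      hxd.comp (hφ.tendsto_atTop)
    have ht2 : Filter.Tendsto (fun n => x (φ n)) Filter.atTop (nhds (νl • e1 + πl ᵥ* W)) := by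
      rw [tendsto_pi_nhds]
      intro j
      have hxj : ∀ n, x (φ n) j = ν (φ n) * e1 j + ∑ k, π (φ n) k * W k j := by
        intro n
        rw [hx (φ n)]
        simp [Matrix.vecMul, dotProduct]
      have : Filter.Tendsto (fun n => ν (φ n) * e1 j + ∑ k, π (φ n) k * W k j)
          Filter.atTop (nhds (νl * e1 j + ∑ k, πl k * W k j)) :=
        (hνt.mul tendsto_const_nhds).add
          (tendsto_finset_sum _ fun k _ => (hπtk k).mul tendsto_const_nhds)
      simp only [← hxj] at this
      have hval : (νl • e1 + πl ᵥ* W) j = νl * e1 j + ∑ k, πl k * W k j := by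
        simp [Matrix.vecMul, dotProduct]
      rw [hval]
      exact this
    exact tendsto_nhds_unique ht1 ht2
  constructor
  · -- forward direction
    intro h
    have hrow : ∀ i : Fin m, -(F i) ∈ D := by
      intro i
      apply mem_of_dual hDconv hDclosed hDcone ⟨0, h0D⟩
      intro g hg
      have hge1 : 0 ≤ g i0 := by
        have := hg e1 ⟨1, zero_le_one, 0, h0Kd, by simp⟩
        rwa [dotProduct_comm, he1d] at this
      have hWg : W.mulVec g ∈ Kc := by
        apply mem_of_dual hKconv hKclosed hKcone hKne
        intro π hπ
        have hmemD : π ᵥ* W ∈ D := ⟨0, le_rfl, π, hπ, by simp⟩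
        have := hg _ hmemD
        rwa [dotProduct_comm, ← dotProduct_mulVec] at this
      rcases eq_or_lt_of_le hge1 with hg0 | hg0
      · -- g i0 = 0, so g = 0 by compactness of Ξ
        have hgz : g = 0 := by
          by_contra hgne
          obtain ⟨R, hR⟩ := hcpt.isBounded.subset_closedBall 0
          obtain ⟨n, hn⟩ := exists_nat_gt ((R + ‖ξ₀‖) / ‖g‖)
          have hmemΞ : ξ₀ + (n : ℝ) • g ∈ {ξ : Fin N → ℝ | ξ i0 = 1 ∧ W.mulVec ξ ∈ Kc} := by
            constructor
            · show ξ₀ i0 + (n : ℝ) * g i0 = 1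
              rw [hξ₀1, ← hg0, mul_zero, add_zero]
            · rw [Matrix.mulVec_add, Matrix.mulVec_smul]
              exact hKadd _ hWξ₀K _ (hKcone _ (by positivity) _ hWg)
          have h1 := hR hmemΞ
          rw [Metric.mem_closedBall, dist_zero_right] at h1
          have h2 : ‖(n : ℝ) • g‖ ≤ R + ‖ξ₀‖ := by
            have h3 : (n : ℝ) • g = (ξ₀ + (n : ℝ) • g) - ξ₀ := by ring_nf
            rw [h3]
            calc ‖(ξ₀ + (n : ℝ) • g) - ξ₀‖ ≤ ‖ξ₀ + (n : ℝ) • g‖ + ‖ξ₀‖ := norm_sub_le _ _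
              _ ≤ R + ‖ξ₀‖ := by linarith
          rw [norm_smul, Real.norm_natCast] at h2
          have hgn : 0 < ‖g‖ := norm_pos_iff.mpr hgne
          rw [div_lt_iff₀ hgn] at hn
          linarith
        simp [hgz]
      · -- g i0 > 0, rescale into Ξ
        set ξ : Fin N → ℝ := (g i0)⁻¹ • g with hξdef
        have hξ1 : ξ i0 = 1 := by
          show (g i0)⁻¹ * g i0 = 1
          field_simp
        have hξK : W.mulVec ξ ∈ Kc := by
          rw [hξdef, Matrix.mulVec_smul]
          exact hKcone _ (by positivity) _ hWg
        have hle0 := h ξ hξ1 hξK i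
        have hFξ : F.mulVec ξ i = (g i0)⁻¹ * (F i ⬝ᵥ g) := by
          show F i ⬝ᵥ ((g i0)⁻¹ • g) = _
          rw [dotProduct_smul, smul_eq_mul]
        rw [hFξ] at hle0
        have hle : F i ⬝ᵥ g ≤ 0 := by
          have h4 := mul_nonpos_of_nonneg_of_nonpos (le_of_lt hg0) hle0
          rwa [← mul_assoc, mul_inv_cancel₀ (ne_of_gt hg0), one_mul] at h4
        rw [dotProduct_neg, dotProduct_comm]
        linarith
    choose νf hνf πf hπf heq using hrow
    refine ⟨-F, νf, fun k j => πf j k, hνf, fun j x hx => hπf j x hx, by simp, ?_⟩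
    ext i j
    have h5 := congrFun (heq i) j
    simp only [Pi.neg_apply, Pi.add_apply, Pi.smul_apply, smul_eq_mul] at h5
    rw [Matrix.neg_apply, Matrix.add_apply, Matrix.vecMulVec_apply, Matrix.mul_apply, h5]
    simp [Matrix.vecMul, dotProduct, Matrix.transpose_apply]
    rfl
  · -- reverse direction
    rintro ⟨Z, ν, P, hν, hP, hFZ, hZ⟩ ξ hξ1 hξK i
    have hF : F = -Z := eq_neg_of_add_eq_zero_left hFZ
    rw [hF, hZ, Matrix.neg_mulVec, Pi.neg_apply, Matrix.add_mulVec, Pi.add_apply]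
    have h1 : ((vecMulVec ν e1) *ᵥ ξ) i = ν i * (e1 ⬝ᵥ ξ) := by
      simp [Matrix.mulVec, dotProduct, Matrix.vecMulVec_apply, mul_assoc, Finset.mul_sum]
    rw [h1, he1d, hξ1, mul_one, ← Matrix.mulVec_mulVec]
    have h2 : 0 ≤ (P.transpose *ᵥ (W *ᵥ ξ)) i := by
      have := hP i _ hξK
      simpa [Matrix.mulVec, dotProduct, Matrix.transpose_apply] using this
    have h3 := hν i
    linarith
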